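/- The graded abelian groups G_n defined recursively by G_0(i) = ℤ_{(1)} for i=1, ℤ_{(0)}³ for i=0, ℤ_{(-1)} for i=-1, and the recursion of Theorem 1.2 with t=0, τ=0, g=1, satisfy the closed formula: G_n(1) = ⊕_{k=0}^{n} ℤ^{2^n·C(n,k)} in grading 1-k, G_n(0) = ℤ in grading 0 plus ⊕_{k=0}^{n} ℤ^{2^{n+1}·C(n,k)} in grading -k, and G_n(-1) = ⊕_{k=0}^{n} ℤ^{2^n·C(n,k)} in grading -1-k. -/
import Mathlib


/-- The ranks, in each Maslov grading `m : ℤ`, of the three graded groups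
`(HFK(Dⁿ,1), HFK(Dⁿ,0), HFK(Dⁿ,-1))` of the `n`-th iterated untwisted Whitehead
double of the figure eight knot, computed recursively from Theorem 1.2 with
parameters `t = 0`, `τ = 0`, `g = 1`.  The base case is the figure eight knot
`D⁰ = 4₁`, and the recursive step forms the filtration homologies
`F(-1) = Cₙ`, `F(0) = ker(d₁⁰ : Bₙ → Cₙ[-1])` (using that `d₁⁰` is surjective),
`F(1) = ℤ₍₀₎`, sums them into `S`, and applies Theorem 1.2. -/
def whiteheadTriple : ℕ → (ℤ → ℕ) × (ℤ → ℕ) × (ℤ → ℕ)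
  | 0 =>
    (fun m => if m = 1 then 1 else 0,
     fun m => if m = 0 then 3 else 0,
     fun m => if m = -1 then 1 else 0)
  | n + 1 =>
    let B := (whiteheadTriple n).2.1
    let C := (whiteheadTriple n).2.2
    -- homology of the filtration levels F(-1) ⊆ F(0) ⊆ F(1)
    let F0 : ℤ → ℕ := fun m => B m - C (m - 1)
    let F1 : ℤ → ℕ := fun m => if m = 0 then 1 else 0
    let S : ℤ → ℕ := fun m => C m + F0 m + F1 m
    (fun m => 2 * S (m - 1) - (if m = 1 then 4 else 0),
     fun m => 4 * S m - (if m = 0 then 7 else 0),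
     fun m => 2 * S (m + 1) - (if m = -1 then 4 else 0))

lemma ifc (N c : ℕ) (t : ℤ) :
    (if 0 ≤ t ∧ t ≤ (N:ℤ) then c * N.choose t.toNat else 0)
      = if 0 ≤ t then c * N.choose t.toNat else 0 := by
  split_ifs with h1 h2 <;> try rfl
  · exact absurd h1.1 h2
  · rw [Nat.choose_eq_zero_of_lt (by omega), mul_zero]

lemma arith (p x y : ℕ) :
    2 * (p * x + ((0 + (2*p) * y) - p * y) + 0) - 0 = (2*p) * (x + y) := by
  have h : (2*p)*y = p*y + p*y := by ring
  rw [h, zero_add, Nat.add_sub_cancel, Nat.sub_zero]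
  ring

lemma arith4 (p x y : ℕ) :
    4 * (p * x + ((0 + (2*p) * y) - p * y) + 0) - 0 = 0 + (2*(2*p)) * (x + y) := by
  have h : (0 + (2*p)*y) - p*y = p*y := by
    rw [zero_add, two_mul, add_mul, Nat.add_sub_cancel]
  rw [h, Nat.sub_zero]
  ring


/-- Proposition 7.1 (closed formula for the knot Floer homology of the iterated
untwisted Whitehead doubles of the figure eight knot): the recursively defined
graded ranks satisfy
`Gₙ(1) = ⊕ₖ ℤ^{2ⁿ·C(n,k)}` in grading `1 - k`,
`Gₙ(0) = ℤ₍₀₎ ⊕ ⊕ₖ ℤ^{2ⁿ⁺¹·C(n,k)}` in grading `-k`, and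
`Gₙ(-1) = ⊕ₖ ℤ^{2ⁿ·C(n,k)}` in grading `-1 - k`, for `k = 0, …, n`. -/
theorem whiteheadTriple_closed_formula (n : ℕ) :
    ((whiteheadTriple n).1 = fun m => if 1 - (n : ℤ) ≤ m ∧ m ≤ 1 then
        2 ^ n * Nat.choose n (1 - m).toNat else 0) ∧
    ((whiteheadTriple n).2.1 = fun m => (if m = 0 then 1 else 0) +
        (if -(n : ℤ) ≤ m ∧ m ≤ 0 then 2 ^ (n + 1) * Nat.choose n (-m).toNat else 0)) ∧
    ((whiteheadTriple n).2.2 = fun m => if -1 - (n : ℤ) ≤ m ∧ m ≤ -1 then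
        2 ^ n * Nat.choose n (-1 - m).toNat else 0) := by
  induction n with
  | zero =>
    refine ⟨?_, ?_, ?_⟩ <;> funext m <;> simp only [whiteheadTriple] <;>
      split_ifs with h1 h2 <;> first
        | rfl
        | omega
        | (subst h1; norm_num)
  | succ n ih =>
    obtain ⟨hA, hB, hC⟩ := ih
    refine ⟨?_, ?_, ?_⟩ <;> funext m <;> simp only [whiteheadTriple, hB, hC]
    · -- component A
      simp only [show (-1-(m-1):ℤ) = -m from by ring, show (-(m-1):ℤ) = 1-m from by ring,
        show (-1-(m-1-1):ℤ) = 1-m from by ring,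
        show (-1 - (n:ℤ) ≤ m-1 ∧ m-1 ≤ -1) = (0 ≤ -m ∧ -m ≤ (n:ℤ)) from by rw [eq_iff_iff]; omega,
        show (-(n:ℤ) ≤ m-1 ∧ m-1 ≤ 0) = (0 ≤ 1-m ∧ 1-m ≤ (n:ℤ)) from by rw [eq_iff_iff]; omega,
        show (-1-(n:ℤ) ≤ m-1-1 ∧ m-1-1 ≤ -1) = (0 ≤ 1-m ∧ 1-m ≤ (n:ℤ)) from by
          rw [eq_iff_iff]; omega,
        show (1 - ((n+1:ℕ):ℤ) ≤ m ∧ m ≤ 1) = (0 ≤ 1-m ∧ 1-m ≤ ((n+1:ℕ):ℤ)) from by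
          rw [eq_iff_iff]; push_cast; omega]
      simp only [ifc]
      rcases le_or_gt m 0 with hm | hm
      · simp only [if_pos (show (0:ℤ) ≤ -m by omega), if_pos (show (0:ℤ) ≤ 1-m by omega),
          if_neg (show ¬(m-1 = 0) by omega), if_neg (show ¬(m = 1) by omega)]
        rw [show (1-m).toNat = (-m).toNat + 1 from by omega, Nat.choose_succ_succ',
          show (2:ℕ)^(n+1) = 2*2^n from by ring]
        exact arith _ _ _
      · by_cases hm1 : m = 1
        · subst hm1
          norm_num
          rw [show (2:ℕ)^(n+1) = 2*2^n from by ring]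
          generalize (2:ℕ)^n = p
          omega
        · simp only [if_neg (show ¬((0:ℤ) ≤ -m) by omega),
            if_neg (show ¬((0:ℤ) ≤ 1-m) by omega),
            if_neg (show ¬(m-1 = 0) by omega), if_neg hm1]
    · -- component B
      simp only [show (-1-(m-1):ℤ) = -m from by ring,
        show (-1 - (n:ℤ) ≤ m ∧ m ≤ -1) = (0 ≤ -1-m ∧ -1-m ≤ (n:ℤ)) from by rw [eq_iff_iff]; omega,
        show (-(n:ℤ) ≤ m ∧ m ≤ 0) = (0 ≤ -m ∧ -m ≤ (n:ℤ)) from by rw [eq_iff_iff]; omega,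
        show (-1-(n:ℤ) ≤ m-1 ∧ m-1 ≤ -1) = (0 ≤ -m ∧ -m ≤ (n:ℤ)) from by rw [eq_iff_iff]; omega,
        show (-((n+1:ℕ):ℤ) ≤ m ∧ m ≤ 0) = (0 ≤ -m ∧ -m ≤ ((n+1:ℕ):ℤ)) from by
          rw [eq_iff_iff]; push_cast; omega]
      simp only [ifc]
      rcases le_or_gt m (-1) with hm | hm
      · simp only [if_pos (show (0:ℤ) ≤ -1-m by omega), if_pos (show (0:ℤ) ≤ -m by omega),
          if_neg (show ¬(m = 0) by omega)]
        rw [show (-m).toNat = (-1-m).toNat + 1 from by omega, Nat.choose_succ_succ',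
          show (2:ℕ)^(n+1) = 2*2^n from by ring, show (2:ℕ)^(n+1+1) = 2*(2*2^n) from by ring]
        exact arith4 _ _ _
      · by_cases hm0 : m = 0
        · subst hm0
          norm_num
          rw [show (2:ℕ)^(n+1) = 2*2^n from by ring, show (2:ℕ)^(n+1+1) = 2*(2*2^n) from by ring]
          generalize (2:ℕ)^n = p
          omega
        · simp only [if_neg (show ¬((0:ℤ) ≤ -1-m) by omega),
            if_neg (show ¬((0:ℤ) ≤ -m) by omega), if_neg hm0]
    · -- component C
      simp only [show (-1-(m+1):ℤ) = -2-m from by ring, show (-(m+1):ℤ) = -1-m from by ring,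
        show (-1-(m+1-1):ℤ) = -1-m from by ring,
        show (-1 - (n:ℤ) ≤ m+1 ∧ m+1 ≤ -1) = (0 ≤ -2-m ∧ -2-m ≤ (n:ℤ)) from by
          rw [eq_iff_iff]; omega,
        show (-(n:ℤ) ≤ m+1 ∧ m+1 ≤ 0) = (0 ≤ -1-m ∧ -1-m ≤ (n:ℤ)) from by
          rw [eq_iff_iff]; omega,
        show (-1-(n:ℤ) ≤ m+1-1 ∧ m+1-1 ≤ -1) = (0 ≤ -1-m ∧ -1-m ≤ (n:ℤ)) from by
          rw [eq_iff_iff]; omega,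
        show (-1 - ((n+1:ℕ):ℤ) ≤ m ∧ m ≤ -1) = (0 ≤ -1-m ∧ -1-m ≤ ((n+1:ℕ):ℤ)) from by
          rw [eq_iff_iff]; push_cast; omega]
      simp only [ifc]
      rcases le_or_gt m (-2) with hm | hm
      · simp only [if_pos (show (0:ℤ) ≤ -2-m by omega), if_pos (show (0:ℤ) ≤ -1-m by omega),
          if_neg (show ¬(m+1 = 0) by omega), if_neg (show ¬(m = -1) by omega)]
        rw [show (-1-m).toNat = (-2-m).toNat + 1 from by omega, Nat.choose_succ_succ',
          show (2:ℕ)^(n+1) = 2*2^n from by ring]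
        exact arith _ _ _
      · by_cases hm1 : m = -1
        · subst hm1
          norm_num
          rw [show (2:ℕ)^(n+1) = 2*2^n from by ring]
          generalize (2:ℕ)^n = p
          omega
        · simp only [if_neg (show ¬((0:ℤ) ≤ -2-m) by omega),
            if_neg (show ¬((0:ℤ) ≤ -1-m) by omega),
            if_neg (show ¬(m+1 = 0) by omega), if_neg hm1]
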